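/- Let E be a real Hilbert space, let F : E → ℝ be differentiable with L₀-Lipschitz gradient, let h : E → ℝ be convex, let η' > 0, and let g, R ∈ E. Suppose R⁺ ∈ E is a minimizer over E of u ↦ ⟨g, u⟩ + h(u) + (1/(2η'))‖u − R‖², and set 𝒢̃ = (R − R⁺)/η'. Then F(R⁺) + h(R⁺) ≤ F(R) + h(R) + (η'²L₀/2 − 3η'/4)‖𝒢̃‖² + η'‖g − ∇F(R)‖². -/

import Mathlib

open scoped RealInnerProductSpace


lemma descent_lemma {E : Type*} [NormedAddCommGroup E] [InnerProductSpace ℝ E] [CompleteSpace E]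
    (L₀ : ℝ) (Fn : E → ℝ) (hdiff : Differentiable ℝ Fn)
    (hlip : ∀ x y : E, ‖gradient Fn x - gradient Fn y‖ ≤ L₀ * ‖x - y‖)
    (x y : E) :
    Fn y ≤ Fn x + ⟪gradient Fn x, y - x⟫ + L₀ / 2 * ‖y - x‖ ^ 2 := by
  set v := y - x with hv
  have hcont : Continuous (gradient Fn) := by
    have : LipschitzWith (Real.toNNReal L₀) (gradient Fn) :=
      LipschitzWith.of_dist_le_mul fun a b => by
        rw [dist_eq_norm, dist_eq_norm]
        calc ‖gradient Fn a - gradient Fn b‖ ≤ L₀ * ‖a - b‖ := hlip a b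
          _ ≤ Real.toNNReal L₀ * ‖a - b‖ :=
            mul_le_mul_of_nonneg_right (Real.le_coe_toNNReal L₀) (norm_nonneg _)
    exact this.continuous
  have hderiv : ∀ t : ℝ, HasDerivAt (fun t : ℝ => Fn (x + t • v))
      ⟪gradient Fn (x + t • v), v⟫ t := by
    intro t
    have h1 : HasDerivAt (fun t : ℝ => x + t • v) v t := by
      simpa using ((hasDerivAt_id t).smul_const v).const_add x
    have h2 := ((hdiff (x + t • v)).hasGradientAt).hasFDerivAt
    have := h2.comp_hasDerivAt t h1
    simpa [InnerProductSpace.toDual_apply_apply, Function.comp_def] using this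
  have hcont2 : Continuous fun t : ℝ => ⟪gradient Fn (x + t • v), v⟫ :=
    (hcont.comp (by continuity : Continuous fun t : ℝ => x + t • v)).inner continuous_const
  have hFTC : ∫ t in (0:ℝ)..1, ⟪gradient Fn (x + t • v), v⟫ = Fn y - Fn x := by
    have := intervalIntegral.integral_eq_sub_of_hasDerivAt
      (f := fun t : ℝ => Fn (x + t • v))
      (f' := fun t : ℝ => ⟪gradient Fn (x + t • v), v⟫)
      (fun t _ => hderiv t) (hcont2.intervalIntegrable 0 1)
    simpa [hv] using this
  have hbound : ∫ t in (0:ℝ)..1, ⟪gradient Fn (x + t • v), v⟫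
      ≤ ∫ t in (0:ℝ)..1, (⟪gradient Fn x, v⟫ + L₀ * t * ‖v‖ ^ 2) := by
    apply intervalIntegral.integral_mono_on (by norm_num)
      (hcont2.intervalIntegrable 0 1)
      (((by continuity : Continuous fun t : ℝ => ⟪gradient Fn x, v⟫ + L₀ * t * ‖v‖ ^ 2).intervalIntegrable 0 1))
    intro t ht
    have key : ⟪gradient Fn (x + t • v) - gradient Fn x, v⟫ ≤ L₀ * t * ‖v‖ ^ 2 := by
      calc ⟪gradient Fn (x + t • v) - gradient Fn x, v⟫
          ≤ ‖gradient Fn (x + t • v) - gradient Fn x‖ * ‖v‖ := real_inner_le_norm _ _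
        _ ≤ (L₀ * ‖(x + t • v) - x‖) * ‖v‖ :=
            mul_le_mul_of_nonneg_right (hlip _ _) (norm_nonneg _)
        _ = L₀ * t * ‖v‖ ^ 2 := by
            rw [add_sub_cancel_left, norm_smul, Real.norm_eq_abs, abs_of_nonneg ht.1]
            ring
    have := inner_sub_left (𝕜 := ℝ) (gradient Fn (x + t • v)) (gradient Fn x) v
    simp only [this] at key ⊢
    linarith
  have hint : ∫ t in (0:ℝ)..1, (⟪gradient Fn x, v⟫ + L₀ * t * ‖v‖ ^ 2)
      = ⟪gradient Fn x, v⟫ + L₀ / 2 * ‖v‖ ^ 2 := by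
    rw [intervalIntegral.integral_add (intervalIntegrable_const)
      ((by continuity : Continuous fun t : ℝ => L₀ * t * ‖v‖ ^ 2).intervalIntegrable 0 1)]
    simp only [intervalIntegral.integral_const, smul_eq_mul]
    have : ∫ t in (0:ℝ)..1, L₀ * t * ‖v‖ ^ 2 = L₀ / 2 * ‖v‖ ^ 2 := by
      have : (fun t : ℝ => L₀ * t * ‖v‖ ^ 2) = fun t : ℝ => (L₀ * ‖v‖ ^ 2) * t := by
        ext t; ring
      rw [this, intervalIntegral.integral_const_mul, integral_id]
      norm_num; ring
    rw [this]; ring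
  linarith [hFTC ▸ hbound, hint]

/-- inequalities (21)–(22) in the proof of Theorem 1. Composite descent
inequality for an inexact proximal-gradient step:
`F(R⁺) + h(R⁺) ≤ F(R) + h(R) + (η'²L₀/2 − 3η'/4)‖𝒢̃‖² + η'‖g − ∇F(R)‖²`. -/
theorem stmt12 {E : Type*} [NormedAddCommGroup E] [InnerProductSpace ℝ E] [CompleteSpace E]
    (L₀ : ℝ) (Fn : E → ℝ) (hdiff : Differentiable ℝ Fn)
    (hlip : ∀ x y : E, ‖gradient Fn x - gradient Fn y‖ ≤ L₀ * ‖x - y‖)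
    (h : E → ℝ) (hconv : ConvexOn ℝ Set.univ h)
    (η' : ℝ) (hη' : 0 < η') (g R Rplus : E)
    (hmin : ∀ u : E,
      ⟪g, Rplus⟫ + h Rplus + 1 / (2 * η') * ‖Rplus - R‖ ^ 2
        ≤ ⟪g, u⟫ + h u + 1 / (2 * η') * ‖u - R‖ ^ 2) :
    Fn Rplus + h Rplus
      ≤ Fn R + h R + (η' ^ 2 * L₀ / 2 - 3 * η' / 4) * ‖(1 / η') • (R - Rplus)‖ ^ 2
        + η' * ‖g - gradient Fn R‖ ^ 2 := by
  set D : ℝ := ‖Rplus - R‖ ^ 2 with hD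
  have hD0 : 0 ≤ D := sq_nonneg _
  set s : ℝ := ⟪g, R - Rplus⟫ with hs
  -- key proximal inequality
  have hkey : h Rplus ≤ h R + s - (1 / η') * D := by
    by_contra hcon
    push_neg at hcon
    set ε : ℝ := h Rplus - (h R + s - (1 / η') * D) with hε
    have hε0 : 0 < ε := by simp only [hε]; linarith
    set t : ℝ := min 1 (2 * η' * ε / (D + 1)) with ht
    have ht0 : 0 < t := lt_min one_pos (by positivity)
    have ht1 : t ≤ 1 := min_le_left _ _
    have htle : t ≤ 2 * η' * ε / (D + 1) := min_le_right _ _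
    clear_value t
    clear ht
    have htD : t * D / (2 * η') < ε := by
      have h1 := htle
      have hD1 : (0:ℝ) < D + 1 := by linarith
      have h1' : t * (D + 1) ≤ 2 * η' * ε := by
        rw [div_eq_mul_inv] at h1
        have h2 := mul_le_mul_of_nonneg_right h1 (le_of_lt hD1)
        rw [mul_assoc, inv_mul_cancel₀ (ne_of_gt hD1), mul_one] at h2
        exact h2
      have h2 : t * D < 2 * η' * ε := by nlinarith
      rw [div_lt_iff₀ (by positivity)]
      linarith
    -- convex combination
    have hu := hmin (Rplus + t • (R - Rplus))
    have hcomb : h (Rplus + t • (R - Rplus)) ≤ (1 - t) * h Rplus + t * h R := by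
      have := hconv.2 (Set.mem_univ Rplus) (Set.mem_univ R)
        (by linarith : (0:ℝ) ≤ 1 - t) (le_of_lt ht0) (by ring)
      have heq : (1 - t) • Rplus + t • R = Rplus + t • (R - Rplus) := by
        module
      rw [heq, smul_eq_mul, smul_eq_mul] at this
      exact this
    have hinner : ⟪g, Rplus + t • (R - Rplus)⟫ = ⟪g, Rplus⟫ + t * s := by
      rw [inner_add_right, real_inner_smul_right]
    have hnorm : ‖(Rplus + t • (R - Rplus)) - R‖ ^ 2 = (1 - t) ^ 2 * D := by
      have heq : (Rplus + t • (R - Rplus)) - R = (1 - t) • (Rplus - R) := by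
        module
      rw [heq, norm_smul, Real.norm_eq_abs, abs_of_nonneg (by linarith : (0:ℝ) ≤ 1 - t),
        mul_pow]
    rw [hinner, hnorm] at hu
    have hcη : 0 < 1 / (2 * η') := by positivity
    -- derive h Rplus ≤ s + h R - (1/(2η')) * (2 - t) * D
    have hdiv : h Rplus ≤ s + h R - 1 / (2 * η') * (2 - t) * D := by
      have expand : 1 / (2 * η') * ((1 - t) ^ 2 * D) - 1 / (2 * η') * D
          = - (1 / (2 * η') * (t * (2 - t)) * D) := by ring
      nlinarith [hu, hcomb, mul_pos ht0 hcη]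
    have : (1 / η') * D - 1 / (2 * η') * (2 - t) * D = t * D / (2 * η') := by
      field_simp; ring
    have hfin : h Rplus ≤ h R + s - (1 / η') * D + t * D / (2 * η') := by linarith
    linarith
  -- smoothness
  have hsm := descent_lemma L₀ Fn hdiff hlip R Rplus
  have hsm' : Fn Rplus ≤ Fn R + ⟪gradient Fn R, Rplus - R⟫ + L₀ / 2 * D := by
    simpa [hD] using hsm
  -- Cauchy-Schwarz + Young
  set a : ℝ := ‖g - gradient Fn R‖ with ha
  set b : ℝ := ‖Rplus - R‖ with hb
  have hcs : ⟪gradient Fn R, Rplus - R⟫ + s ≤ a * b := by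
    have h1 : ⟪gradient Fn R, Rplus - R⟫ = - ⟪gradient Fn R, R - Rplus⟫ := by
      rw [← inner_neg_right]; congr 1; abel
    have h2 : ⟪g - gradient Fn R, R - Rplus⟫
        = ⟪g, R - Rplus⟫ - ⟪gradient Fn R, R - Rplus⟫ := inner_sub_left _ _ _
    have h3 : ⟪g - gradient Fn R, R - Rplus⟫ ≤ a * b := by
      calc ⟪g - gradient Fn R, R - Rplus⟫ ≤ ‖g - gradient Fn R‖ * ‖R - Rplus‖ :=
            real_inner_le_norm _ _
        _ = a * b := by rw [ha, hb, norm_sub_rev R Rplus]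
    rw [h1, hs]
    linarith
  have hG : ‖(1 / η') • (R - Rplus)‖ ^ 2 = (1 / η') ^ 2 * D := by
    rw [norm_smul, Real.norm_eq_abs, abs_of_pos (by positivity : (0:ℝ) < 1 / η'),
      mul_pow, hD, norm_sub_rev R Rplus]
  have hyoung : a * b ≤ η' * a ^ 2 + b ^ 2 / (4 * η') := by
    have h2 : (a * b) * (4 * η') ≤ (η' * a ^ 2 + b ^ 2 / (4 * η')) * (4 * η') := by
      field_simp
      nlinarith [sq_nonneg (2 * η' * a - b)]
    exact le_of_mul_le_mul_right h2 (by positivity)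
  rw [hG]
  have hη2 : (η' ^ 2 * L₀ / 2 - 3 * η' / 4) * ((1 / η') ^ 2 * D)
      = L₀ / 2 * D - 3 / (4 * η') * D := by
    field_simp
  rw [hη2]
  have hid : (1 / η') * b ^ 2 - b ^ 2 / (4 * η') = 3 / (4 * η') * b ^ 2 := by
    field_simp; ring
  have hDb : D = b ^ 2 := rfl
  rw [hDb] at hkey hsm' ⊢
  linarith [hkey, hsm', hcs, hyoung, hid]
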